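/- Let S be a complete separable metric space and ξ = (ξ_i) an exchangeable sequence of S-valued random variables with directing random measure μ (the a.s.-unique random probability measure with P(ξ ∈ A | μ) = μ^∞(A) a.s.). Then with probability one, the empirical measures μ_n = n⁻¹ ∑_{i=1}^n δ_{ξ_i} converge weakly to μ, i.e. converge in the Prohorov metric on M₁(S). -/

import Mathlib

open MeasureTheory ProbabilityTheory TopologicalSpace Filter Topology ENNReal

noncomputable section

/-- `π` is the infinite product (i.i.d.) measure on `ℕ → X` with all factors `ν`. -/
def IsIIDProduct {X : Type*} [MeasurableSpace X] (ν : Measure X) (π : Measure (ℕ → X)) : Prop :=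
  IsProbabilityMeasure π ∧
    ∀ (n : ℕ) (A : Fin n → Set X), (∀ i, MeasurableSet (A i)) →
      π {x | ∀ i : Fin n, x (i : ℕ) ∈ A i} = ∏ i : Fin n, ν (A i)

section AuxIID

variable {X : Type*} [MeasurableSpace X] {ν : Measure X} {π : Measure (ℕ → X)}

lemma IsIIDProduct.marginal (h : IsIIDProduct ν π) [IsProbabilityMeasure ν] (i : ℕ)
    {s : Set X} (hs : MeasurableSet s) : π ((fun x => x i) ⁻¹' s) = ν s := by
  classical
  have key := h.2 (i+1) (fun k => if (k : ℕ) = i then s else Set.univ)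
    (fun k => by by_cases hk : (k:ℕ) = i <;> simp [hk, hs])
  have hset : {x : ℕ → X | ∀ k : Fin (i+1), x (k:ℕ) ∈ if (k : ℕ) = i then s else Set.univ}
      = (fun x => x i) ⁻¹' s := by
    ext x
    constructor
    · intro hx
      have := hx ⟨i, Nat.lt_succ_self i⟩
      simpa using this
    · intro hx k
      by_cases hk : (k:ℕ) = i
      · simpa [hk] using hx
      · simp [hk]
  rw [hset] at key
  rw [key]
  rw [Finset.prod_eq_single (⟨i, Nat.lt_succ_self i⟩ : Fin (i+1))]
  · simp
  · intro b _ hb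
    have hbne : (b : ℕ) ≠ i := by
      intro hc; exact hb (Fin.ext (by simpa using hc))
    simp [hbne]
  · simp

lemma IsIIDProduct.indepFun_coord (h : IsIIDProduct ν π) [IsProbabilityMeasure ν]
    {i j : ℕ} (hij : i ≠ j) :
    IndepFun (fun x : ℕ → X => x i) (fun x : ℕ → X => x j) π := by
  classical
  rw [indepFun_iff_measure_inter_preimage_eq_mul]
  intro s t hs ht
  set n := max i j + 1 with hn
  have hi : i < n := Nat.lt_succ_of_le (le_max_left i j)
  have hj : j < n := Nat.lt_succ_of_le (le_max_right i j)
  set A : Fin n → Set X := fun k => if (k : ℕ) = i then s else if (k : ℕ) = j then t else Set.univ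
    with hA
  have key := h.2 n A (fun k => by
    by_cases hk : (k:ℕ) = i
    · simp [hA, hk, hs]
    · by_cases hk' : (k:ℕ) = j <;> simp [hA, hk, hk', ht, Ne.symm hij])
  have hset : {x : ℕ → X | ∀ k : Fin n, x (k:ℕ) ∈ A k}
      = (fun x : ℕ → X => x i) ⁻¹' s ∩ (fun x : ℕ → X => x j) ⁻¹' t := by
    ext x
    constructor
    · intro hx
      have h1 := hx ⟨i, hi⟩
      have h2 := hx ⟨j, hj⟩
      simp only [hA] at h1 h2
      constructor
      · simpa using h1
      · simpa [Ne.symm hij] using h2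
    · rintro ⟨h1, h2⟩ k
      simp only [hA]
      by_cases hk : (k:ℕ) = i
      · simpa [hk] using h1
      · by_cases hk' : (k:ℕ) = j
        · simpa [hk, hk', Ne.symm hij] using h2
        · simp [hk, hk']
  rw [hset] at key
  rw [key, h.marginal i hs, h.marginal j ht]
  have hij' : (⟨i, hi⟩ : Fin n) ≠ ⟨j, hj⟩ := by
    intro hc; exact hij (by simpa using congrArg Fin.val hc)
  have : ∏ k : Fin n, ν (A k) = ∏ k ∈ ({⟨i, hi⟩, ⟨j, hj⟩} : Finset (Fin n)), ν (A k) := by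
    refine (Finset.prod_subset (Finset.subset_univ _) ?_).symm
    intro b _ hb
    simp only [Finset.mem_insert, Finset.mem_singleton, not_or] at hb
    have hb1 : (b : ℕ) ≠ i := fun hc => hb.1 (Fin.ext (by simpa using hc))
    have hb2 : (b : ℕ) ≠ j := fun hc => hb.2 (Fin.ext (by simpa using hc))
    simp [hA, hb1, hb2]
  rw [this, Finset.prod_pair hij']
  simp [hA, hij.symm]

lemma IsIIDProduct.identDistrib_coord (h : IsIIDProduct ν π) [IsProbabilityMeasure ν] (i : ℕ) :
    IdentDistrib (fun x : ℕ → X => x i) (fun x : ℕ → X => x 0) π π := by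
  have hmap : ∀ k : ℕ, Measure.map (fun x : ℕ → X => x k) π = ν := by
    intro k
    ext s hs
    rw [Measure.map_apply (measurable_pi_apply k) hs, h.marginal k hs]
  exact ⟨(measurable_pi_apply i).aemeasurable, (measurable_pi_apply 0).aemeasurable,
    by rw [hmap i, hmap 0]⟩

end AuxIID

/-- average of indicator values along the first `n+1` coordinates -/
def avgInd {S : Type*} (U : Set S) (n : ℕ) (x : ℕ → S) : ℝ :=
  (∑ i ∈ Finset.range (n+1), Set.indicator U (fun _ => (1:ℝ)) (x i)) / (n+1)

lemma measurable_avgInd {S : Type*} [MeasurableSpace S] {U : Set S} (hU : MeasurableSet U)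
    (n : ℕ) : Measurable (avgInd U n) := by
  apply Measurable.div_const
  apply Finset.measurable_sum
  intro i _
  exact ((measurable_indicator_const_iff 1).2 hU).comp (measurable_pi_apply i)

/-- SLLN for indicators of a measurable set under an iid product measure. -/
lemma IsIIDProduct.avg_indicator_tendsto {X : Type*} [MeasurableSpace X] {ν : Measure X}
    {π : Measure (ℕ → X)} (h : IsIIDProduct ν π) [IsProbabilityMeasure ν]
    {U : Set X} (hU : MeasurableSet U) :
    ∀ᵐ x ∂π, Tendsto (fun n : ℕ => avgInd U n x) atTop (𝓝 ((ν U).toReal)) := by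
  haveI : IsProbabilityMeasure π := h.1
  set F : X → ℝ := Set.indicator U (fun _ => (1:ℝ)) with hF
  have hFmeas : Measurable F := (measurable_indicator_const_iff 1).2 hU
  set Y : ℕ → (ℕ → X) → ℝ := fun i x => F (x i) with hY
  have hint : Integrable (Y 0) π := by
    have : Y 0 = Set.indicator ((fun x : ℕ → X => x 0) ⁻¹' U) (fun _ => (1:ℝ)) := by
      funext x
      simp only [hY, hF, Set.indicator, Set.mem_preimage]
      rfl
    rw [this]
    exact (integrable_indicator_iff ((measurable_pi_apply 0) hU)).2
      (integrableOn_const (measure_ne_top _ _))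
  have hindep : Pairwise (Function.onFun (IndepFun · · π) Y) := by
    intro i j hij
    exact (h.indepFun_coord hij).comp hFmeas hFmeas
  have hident : ∀ i, IdentDistrib (Y i) (Y 0) π π := fun i =>
    (h.identDistrib_coord i).comp hFmeas
  have hexp : π[Y 0] = (ν U).toReal := by
    have : Y 0 = Set.indicator ((fun x : ℕ → X => x 0) ⁻¹' U) (fun _ => (1:ℝ)) := by
      funext x
      simp only [hY, hF, Set.indicator, Set.mem_preimage]
      rfl
    rw [this, integral_indicator_const (1:ℝ) ((measurable_pi_apply 0) hU),
      measureReal_def, h.marginal 0 hU, smul_eq_mul, mul_one]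
  have hsl := strong_law_ae_real Y hint hindep hident
  rw [hexp] at hsl
  filter_upwards [hsl] with x hx
  have := hx.comp (tendsto_add_atTop_nat 1)
  convert this using 2 with n
  simp only [Function.comp_apply, hY, hF, avgInd]
  push_cast
  ring_nf

/-- the set of sequences whose empirical averages of `U`-indicators eventually stay
`2ε`-close to `c` -/
def goodSet {S : Type*} (U : Set S) (c ε : ℝ) : Set (ℕ → S) :=
  ⋃ N, ⋂ m, {x | |avgInd U (N + m) x - c| ≤ 2 * ε}

lemma measurableSet_goodSet {S : Type*} [MeasurableSpace S] {U : Set S} (hU : MeasurableSet U)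
    (c ε : ℝ) : MeasurableSet (goodSet U c ε) := by
  refine MeasurableSet.iUnion fun N => MeasurableSet.iInter fun m => ?_
  exact measurableSet_le (((measurable_avgInd hU (N+m)).sub measurable_const).abs)
    measurable_const

lemma mem_goodSet_iff {S : Type*} {U : Set S} {c ε : ℝ} {x : ℕ → S} :
    x ∈ goodSet U c ε ↔ ∀ᶠ n in atTop, |avgInd U n x - c| ≤ 2 * ε := by
  constructor
  · rintro hx
    rw [goodSet, Set.mem_iUnion] at hx
    obtain ⟨N, hN⟩ := hx
    rw [Set.mem_iInter] at hN
    rw [eventually_atTop]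
    exact ⟨N, fun n hn => by simpa [Nat.add_sub_cancel' hn] using hN (n - N)⟩
  · intro hx
    rw [eventually_atTop] at hx
    obtain ⟨N, hN⟩ := hx
    rw [goodSet, Set.mem_iUnion]
    exact ⟨N, Set.mem_iInter.2 fun m => hN _ (Nat.le_add_right N m)⟩

lemma empirical_toReal {S : Type*} [MeasurableSpace S] (x : ℕ → S) {V : Set S}
    (hV : MeasurableSet V) (n : ℕ) :
    ((((n + 1 : ℕ) : ℝ≥0∞)⁻¹ •
        ∑ i ∈ Finset.range (n + 1), Measure.dirac (x i) : Measure S) V).toReal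
      = avgInd V n x := by
  rw [Measure.smul_apply, Measure.finset_sum_apply, smul_eq_mul, ENNReal.toReal_mul]
  have h1 : ∀ i, Measure.dirac (x i) V = V.indicator (fun _ => (1:ℝ≥0∞)) (x i) := by
    intro i; rw [Measure.dirac_apply' _ hV]; rfl
  have h2 : (∑ i ∈ Finset.range (n+1), Measure.dirac (x i) V).toReal
      = ∑ i ∈ Finset.range (n+1), Set.indicator V (fun _ => (1:ℝ)) (x i) := by
    rw [ENNReal.toReal_sum]
    · refine Finset.sum_congr rfl fun i _ => ?_
      rw [h1]
      by_cases hx : x i ∈ V <;> simp [hx]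
    · intro i _
      rw [h1]
      by_cases hx : x i ∈ V <;> simp [hx]
  rw [h2, ENNReal.toReal_inv, ENNReal.toReal_natCast, avgInd]
  push_cast
  ring

lemma null_of_condexp {Ω S : Type*} [MeasurableSpace Ω] [MeasurableSpace S]
    (P : Measure Ω) [IsProbabilityMeasure P]
    (ξ : ℕ → Ω → S) (hξ : ∀ i, Measurable (ξ i))
    (μ : Ω → Measure S) (hμm : Measurable μ)
    (μInf : Ω → Measure (ℕ → S))
    (hdirect : ∀ A : Set (ℕ → S), MeasurableSet A →
      P[(A.indicator fun _ => (1:ℝ)) ∘ (fun ω (i : ℕ) => ξ i ω) |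
          MeasurableSpace.comap μ inferInstance]
        =ᵐ[P] fun ω => (μInf ω A).toReal)
    {A : Set (ℕ → S)} (hA : MeasurableSet A)
    {C : Set (Measure S)} (hC : MeasurableSet C)
    (hzero : ∀ ω, μ ω ∈ C → μInf ω A = 0) :
    P ({ω | (fun i => ξ i ω) ∈ A} ∩ μ ⁻¹' C) = 0 := by
  set T : Ω → ℕ → S := fun ω i => ξ i ω with hT
  have hTm : Measurable T := measurable_pi_lambda _ hξ
  set g : Ω → ℝ := (A.indicator fun _ => (1:ℝ)) ∘ T with hg
  have hgeq : g = (T ⁻¹' A).indicator fun _ => (1:ℝ) := by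
    funext ω
    simp only [hg, Function.comp_apply, Set.indicator, Set.mem_preimage]
    rfl
  have hgint : Integrable g P := by
    rw [hgeq]
    exact (integrable_indicator_iff (hTm hA)).2
      (integrableOn_const (measure_ne_top _ _))
  have hm' : MeasurableSpace.comap μ inferInstance ≤ (inferInstance : MeasurableSpace Ω) :=
    hμm.comap_le
  have hB : MeasurableSet[MeasurableSpace.comap μ inferInstance] (μ ⁻¹' C) := ⟨C, hC, rfl⟩
  have hBm : MeasurableSet (μ ⁻¹' C) := hμm hC
  have key : (P ({ω | T ω ∈ A} ∩ μ ⁻¹' C)).toReal = 0 := by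
    have h1 : ∫ ω in μ ⁻¹' C, g ω ∂P = (P ({ω | T ω ∈ A} ∩ μ ⁻¹' C)).toReal := by
      rw [hgeq, setIntegral_indicator (hTm hA), setIntegral_const, smul_eq_mul, mul_one,
        Set.inter_comm]
      rfl
    have h2 : ∫ ω in μ ⁻¹' C, g ω ∂P = ∫ ω in μ ⁻¹' C, (μInf ω A).toReal ∂P := by
      rw [← setIntegral_condExp hm' hgint hB]
      exact setIntegral_congr_ae hBm ((hdirect A hA).mono fun ω h _ => h)
    have h3 : ∫ ω in μ ⁻¹' C, (μInf ω A).toReal ∂P = 0 := by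
      apply setIntegral_eq_zero_of_forall_eq_zero
      intro ω hω
      rw [hzero ω hω, ENNReal.toReal_zero]
    rw [← h1, h2, h3]
  exact (ENNReal.toReal_eq_zero_iff _).1 key |>.resolve_right (measure_ne_top _ _)

/-- If `ξ` is exchangeable with directing random measure `μ`, then a.s. the empirical measures
`μ_n = n⁻¹ ∑_{i=1}^n δ_{ξ_i}` converge weakly (in the Prohorov topology on `M₁(S)`) to `μ`. -/
theorem stmt8 {Ω S : Type*} [MeasurableSpace Ω]
    [MetricSpace S] [CompleteSpace S] [SeparableSpace S] [MeasurableSpace S] [BorelSpace S]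
    (P : Measure Ω) [IsProbabilityMeasure P]
    (ξ : ℕ → Ω → S) (hξ : ∀ i, Measurable (ξ i))
    (hexch : ∀ (m : ℕ) (k : Fin m → ℕ), Function.Injective k →
      Measure.map (fun ω (i : Fin m) => ξ (k i) ω) P
        = Measure.map (fun ω (i : Fin m) => ξ (i : ℕ) ω) P)
    (μ : Ω → Measure S) (hμm : Measurable μ) (hμp : ∀ ω, IsProbabilityMeasure (μ ω))
    (μInf : Ω → Measure (ℕ → S)) (hμInf : ∀ ω, IsIIDProduct (μ ω) (μInf ω))
    (hdirect : ∀ A : Set (ℕ → S), MeasurableSet A →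
      P[(A.indicator fun _ => (1:ℝ)) ∘ (fun ω (i : ℕ) => ξ i ω) |
          MeasurableSpace.comap μ inferInstance]
        =ᵐ[P] fun ω => (μInf ω A).toReal)
    (e : Ω → ℕ → ProbabilityMeasure S)
    (he : ∀ ω n, (e ω n : Measure S)
      = ((n + 1 : ℕ) : ℝ≥0∞)⁻¹ • ∑ i ∈ Finset.range (n + 1), Measure.dirac (ξ i ω))
    (μP : Ω → ProbabilityMeasure S) (hμP : ∀ ω, (μP ω : Measure S) = μ ω) :
    ∀ᵐ ω ∂P, Tendsto (fun n => e ω n) atTop (𝓝 (μP ω)) := by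
  classical
  haveI : SecondCountableTopology S := UniformSpace.secondCountable_of_separable S
  obtain ⟨b, hb⟩ : ∃ b : ℕ → Set S, insert ∅ (countableBasis S) = Set.range b :=
    ((countable_countableBasis S).insert ∅).exists_eq_range ⟨∅, Set.mem_insert _ _⟩
  have hbopen : ∀ i, IsOpen (b i) := by
    intro i
    have hbi : b i ∈ insert ∅ (countableBasis S) := by rw [hb]; exact Set.mem_range_self i
    rcases Set.mem_insert_iff.1 hbi with h | h
    · rw [h]; exact isOpen_empty
    · exact isOpen_of_mem_countableBasis h
  set T : Ω → ℕ → S := fun ω i => ξ i ω with hTdef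
  set UU : Finset ℕ → Set S := fun F => ⋃ i ∈ F, b i with hUU
  have hUUopen : ∀ F, IsOpen (UU F) := fun F => isOpen_biUnion fun i _ => hbopen i
  have hUUmeas : ∀ F, MeasurableSet (UU F) := fun F => (hUUopen F).measurableSet
  set εk : ℕ → ℝ := fun k => 1 / (k+1) with hεk
  have hεpos : ∀ k, 0 < εk k := fun k => by positivity
  set CC : Finset ℕ → ℕ → ℕ → Set (Measure S) :=
    fun F k j => {ν : Measure S | |(ν (UU F)).toReal - j * εk k| ≤ εk k} with hCC
  have hCCmeas : ∀ F k j, MeasurableSet (CC F k j) := by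
    intro F k j
    have hmeas : Measurable fun ν : Measure S => (ν (UU F)).toReal :=
      (Measure.measurable_coe (hUUmeas F)).ennreal_toReal
    exact measurableSet_le ((hmeas.sub measurable_const).abs) measurable_const
  set AA : Finset ℕ → ℕ → ℕ → Set (ℕ → S) :=
    fun F k j => (goodSet (UU F) (j * εk k) (εk k))ᶜ with hAA
  have hAAmeas : ∀ F k j, MeasurableSet (AA F k j) :=
    fun F k j => (measurableSet_goodSet (hUUmeas F) _ _).compl
  -- the exceptional events are null
  have hnull : ∀ (F : Finset ℕ) (k j : ℕ),
      P ({ω | T ω ∈ AA F k j} ∩ μ ⁻¹' (CC F k j)) = 0 := by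
    intro F k j
    refine null_of_condexp P ξ hξ μ hμm μInf hdirect (hAAmeas F k j) (hCCmeas F k j) ?_
    intro ω hω
    haveI := hμp ω
    haveI := (hμInf ω).1
    have hsl := (hμInf ω).avg_indicator_tendsto (hUUmeas F)
    have hae : ∀ᵐ x ∂μInf ω, x ∈ goodSet (UU F) (j * εk k) (εk k) := by
      filter_upwards [hsl] with x hx
      rw [mem_goodSet_iff]
      have hev : ∀ᶠ n in atTop, |avgInd (UU F) n x - (μ ω (UU F)).toReal| < εk k := by
        have h' := Metric.tendsto_atTop.1 hx (εk k) (hεpos k)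
        obtain ⟨N, hN⟩ := h'
        rw [eventually_atTop]
        exact ⟨N, fun n hn => by simpa [Real.dist_eq] using hN n hn⟩
      filter_upwards [hev] with n hn
      have hω' : |(μ ω (UU F)).toReal - j * εk k| ≤ εk k := hω
      calc |avgInd (UU F) n x - j * εk k|
          ≤ |avgInd (UU F) n x - (μ ω (UU F)).toReal|
            + |(μ ω (UU F)).toReal - j * εk k| := abs_sub_le _ _ _
        _ ≤ 2 * εk k := by linarith [hn.le]
    exact ae_iff.1 hae
  -- union is null
  have hNN : P (⋃ (F : Finset ℕ), ⋃ (k : ℕ), ⋃ (j : ℕ),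
      ({ω | T ω ∈ AA F k j} ∩ μ ⁻¹' (CC F k j))) = 0 :=
    measure_iUnion_null fun F => measure_iUnion_null fun k =>
      measure_iUnion_null fun j => hnull F k j
  filter_upwards [measure_eq_zero_iff_ae_notMem.1 hNN] with ω hω
  have hgood : ∀ (F : Finset ℕ) (k j : ℕ),
      ¬ (T ω ∈ AA F k j ∧ μ ω ∈ CC F k j) := by
    intro F k j hc
    exact hω (Set.mem_iUnion.2 ⟨F, Set.mem_iUnion.2 ⟨k, Set.mem_iUnion.2 ⟨j, hc.1, hc.2⟩⟩⟩)
  haveI := hμp ω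
  -- Step A : averages converge for all finite unions of basis sets
  have hA : ∀ F : Finset ℕ,
      Tendsto (fun n => avgInd (UU F) n (T ω)) atTop (𝓝 ((μ ω (UU F)).toReal)) := by
    intro F
    rw [Metric.tendsto_atTop]
    intro δ hδ
    obtain ⟨k, hk⟩ := exists_nat_one_div_lt (show (0:ℝ) < δ/3 by linarith)
    have hkε : εk k < δ / 3 := by simpa [hεk] using hk
    set L := (μ ω (UU F)).toReal with hL
    have hL0 : 0 ≤ L := ENNReal.toReal_nonneg
    set j := ⌊L / εk k⌋₊ with hj
    have hjε : (j : ℝ) * εk k ≤ L := by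
      rw [← le_div_iff₀ (hεpos k)]
      exact Nat.floor_le (div_nonneg hL0 (hεpos k).le)
    have hjε' : L < ((j : ℝ) + 1) * εk k := by
      rw [← div_lt_iff₀ (hεpos k)]
      exact Nat.lt_floor_add_one _
    have hmem : μ ω ∈ CC F k j := by
      show |L - (j : ℝ) * εk k| ≤ εk k
      rw [abs_le]
      constructor
      · nlinarith [hεpos k]
      · nlinarith
    have hTgood : T ω ∈ goodSet (UU F) ((j : ℝ) * εk k) (εk k) := by
      by_contra hc
      exact hgood F k j ⟨hc, hmem⟩
    obtain ⟨N, hN⟩ := eventually_atTop.1 (mem_goodSet_iff.1 hTgood)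
    refine ⟨N, fun n hn => ?_⟩
    have h1 := hN n hn
    rw [Real.dist_eq]
    have h2 : |avgInd (UU F) n (T ω) - L|
        ≤ |avgInd (UU F) n (T ω) - (j : ℝ) * εk k| + |(j : ℝ) * εk k - L| := abs_sub_le _ _ _
    have h3 : |(j : ℝ) * εk k - L| ≤ εk k := by
      rw [abs_sub_comm]
      exact abs_le.2 ⟨by nlinarith [hεpos k], by nlinarith⟩
    calc |avgInd (UU F) n (T ω) - L| ≤ 2 * εk k + εk k := by linarith
      _ < δ := by linarith
  -- Step B : empirical measures of the sets `UU F` converge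
  have hB : ∀ F : Finset ℕ,
      Tendsto (fun n => (e ω n : Measure S) (UU F)) atTop (𝓝 (μ ω (UU F))) := by
    intro F
    have hfin : ∀ n, (e ω n : Measure S) (UU F) ≠ ⊤ := fun n => measure_ne_top _ _
    rw [← ENNReal.tendsto_toReal_iff hfin (measure_ne_top _ _)]
    have heq : (fun n => ((e ω n : Measure S) (UU F)).toReal)
        = fun n => avgInd (UU F) n (T ω) := by
      funext n
      rw [he ω n]
      exact empirical_toReal (T ω) (hUUmeas F) n
    rw [heq]
    exact hA F
  -- Step C : liminf inequality for all open sets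
  have hC : ∀ G : Set S, IsOpen G →
      μ ω G ≤ atTop.liminf (fun n => (e ω n : Measure S) G) := by
    intro G hG
    set V : ℕ → Set S := fun m => ⋃ i ∈ (Finset.range m).filter (fun i => b i ⊆ G), b i with hV
    have hVF : ∀ m, V m = UU ((Finset.range m).filter (fun i => b i ⊆ G)) := fun m => rfl
    have hVmono : Monotone V := by
      intro a a' haa' x hx
      rw [hV, Set.mem_iUnion₂] at hx ⊢
      obtain ⟨i, hi, hxi⟩ := hx
      rw [Finset.mem_filter] at hi
      exact ⟨i, Finset.mem_filter.2 ⟨Finset.mem_range.2 (lt_of_lt_of_le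
        (Finset.mem_range.1 hi.1) haa'), hi.2⟩, hxi⟩
    have hVG : ∀ m, V m ⊆ G := by
      intro m
      refine Set.iUnion₂_subset fun i hi => ?_
      exact (Finset.mem_filter.1 hi).2
    have hUnion : ⋃ m, V m = G := by
      apply Set.Subset.antisymm
      · exact Set.iUnion_subset hVG
      · intro x hx
        obtain ⟨v, hvB, hxv, hvG⟩ :=
          (isBasis_countableBasis S).exists_subset_of_mem_open hx hG
        have hv' : v ∈ Set.range b := by rw [← hb]; exact Set.mem_insert_of_mem _ hvB
        obtain ⟨i, rfl⟩ := hv'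
        refine Set.mem_iUnion.2 ⟨i + 1, ?_⟩
        rw [hV]
        exact Set.mem_biUnion (Finset.mem_filter.2 ⟨Finset.mem_range.2 (Nat.lt_succ_self i),
          hvG⟩) hxv
    have hlim : Tendsto (fun m => μ ω (V m)) atTop (𝓝 (μ ω G)) := by
      have h' := tendsto_measure_iUnion_atTop (μ := μ ω) hVmono
      rw [hUnion] at h'
      exact h'
    refine le_of_tendsto hlim (Filter.Eventually.of_forall fun m => ?_)
    have htd : Tendsto (fun n => (e ω n : Measure S) (V m)) atTop (𝓝 (μ ω (V m))) := by
      rw [hVF m]; exact hB _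
    calc μ ω (V m) = atTop.liminf (fun n => (e ω n : Measure S) (V m)) := htd.liminf_eq.symm
      _ ≤ atTop.liminf (fun n => (e ω n : Measure S) G) :=
          liminf_le_liminf (Filter.Eventually.of_forall fun n => measure_mono (hVG m))
  -- Step D : conclude weak convergence
  refine tendsto_of_forall_isOpen_le_liminf ?_
  intro G hG
  have key := hC G hG
  have aux : (ENNReal.ofNNReal (atTop.liminf fun n => (e ω n) G))
      = atTop.liminf (fun n => ((e ω n) G : ℝ≥0∞)) := by
    refine Monotone.map_liminf_of_continuousAt (F := atTop) ENNReal.coe_mono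
      (fun n => (e ω n) G) ?_ ?_ ?_
    · exact ENNReal.continuous_coe.continuousAt
    · exact IsBoundedUnder.isCoboundedUnder_ge ⟨1, by simp⟩
    · exact ⟨0, by simp⟩
  rw [← ENNReal.coe_le_coe, aux]
  simp only [ProbabilityMeasure.ennreal_coeFn_eq_coeFn_toMeasure, hμP]
  exact key
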